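/- If G = ⊕_{i∈I} G_i where each G_i is a fully invariant subgroup of G, φ is an endomorphism of G, and n is an SH-exponent for the restriction of φ to each G_i, then n is an SH-exponent for φ. -/

import Mathlib

theorem stmt3 {G : Type*} [AddCommGroup G] {I : Type*} (A : I → AddSubgroup G)
    (hindep : iSupIndep A) (hsup : ⨆ i, A i = ⊤)
    (hfi : ∀ i, ∀ ψ : AddMonoid.End G, (A i).map (ψ : G →+ G) ≤ A i)
    (φ : AddMonoid.End G) (n : ℕ)
    (hexp : ∀ i, Set.InjOn (φ : G → G) ((φ ^ n : G →+ G) '' (A i : Set G))) :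
    Set.InjOn (φ : G → G) (Set.range (φ ^ n : G →+ G)) := by
  classical
  have hinj : Function.Injective (DFinsupp.sumAddHom fun i => (A i).subtype) :=
    hindep.dfinsuppSumAddHom_injective
  rintro x ⟨a, rfl⟩ y ⟨b, rfl⟩ hxy
  set g : G := a - b with hgdef
  -- it suffices to show φ^n g = 0
  suffices hsuff : (φ ^ n : G →+ G) g = 0 by
    have : (φ ^ n : G →+ G) a - (φ ^ n : G →+ G) b = 0 := by
      rw [← map_sub]; exact hsuff
    exact sub_eq_zero.mp this
  -- φ^(n+1) g = 0
  have hg1 : (φ ^ (n + 1) : G →+ G) g = 0 := by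
    have h1 : (φ : G → G) ((φ ^ n : G →+ G) a) = (φ : G → G) ((φ ^ n : G →+ G) b) := hxy
    have : (φ ^ (n + 1) : G →+ G) a = (φ ^ (n + 1) : G →+ G) b := by
      simpa [pow_succ', AddMonoid.End.coe_mul] using h1
    simp [hgdef, map_sub, this]
  -- decompose g
  have hgmem : g ∈ ⨆ i, A i := hsup ▸ AddSubgroup.mem_top g
  obtain ⟨f, hf⟩ : ∃ f : Π₀ i, A i,
      DFinsupp.sumAddHom (fun i => (A i).subtype) f = g := by
    refine AddSubgroup.iSup_induction A hgmem (C := fun x => ∃ f : Π₀ i, A i,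
      DFinsupp.sumAddHom (fun i => (A i).subtype) f = x) ?_ ?_ ?_
    · intro i x hx
      exact ⟨DFinsupp.single i ⟨x, hx⟩, DFinsupp.sumAddHom_single _ _ _⟩
    · exact ⟨0, map_zero _⟩
    · rintro x y ⟨f, rfl⟩ ⟨f', rfl⟩
      exact ⟨f + f', map_add _ _ _⟩
  -- componentwise endomorphism
  have hmem : ∀ (ψ : AddMonoid.End G) i (x : A i), (ψ : G →+ G) (x : G) ∈ A i :=
    fun ψ i x => hfi i ψ ⟨(x : G), x.2, rfl⟩
  set ρ : ∀ i, A i →+ A i := fun i =>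
    AddMonoidHom.codRestrict (((φ ^ (n + 1) : AddMonoid.End G) : G →+ G).comp (A i).subtype)
      (A i) (fun x => hmem (φ ^ (n + 1)) i x) with hρdef
  set f' : Π₀ i, A i := DFinsupp.mapRange (fun i => ρ i) (fun i => map_zero _) f with hf'def
  have hsum' : DFinsupp.sumAddHom (fun i => (A i).subtype) f'
      = (φ ^ (n + 1) : G →+ G) (DFinsupp.sumAddHom (fun i => (A i).subtype) f) := by
    rw [DFinsupp.sumAddHom_apply, DFinsupp.sumAddHom_apply, hf'def,
      DFinsupp.sum_mapRange_index (fun i => map_zero _), map_dfinsuppSum]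
    rfl
  have hf'0 : f' = 0 := by
    apply hinj
    rw [hsum', hf, hg1, map_zero]
  -- each component: φ^(n+1) (f i) = 0, hence φ^n (f i) = 0
  have hcomp : ∀ i, (φ ^ n : G →+ G) ((f i : G)) = 0 := by
    intro i
    have h0 : ((ρ i) (f i) : G) = 0 := by
      have := congrArg (fun (h : Π₀ i, A i) => ((h i : A i) : G)) hf'0
      simpa [hf'def, DFinsupp.mapRange_apply] using this
    have h1 : (φ : G → G) ((φ ^ n : G →+ G) (f i : G)) = 0 := by
      have : ((φ ^ (n + 1) : AddMonoid.End G) : G →+ G) (f i : G) = 0 := h0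
      rw [pow_succ'] at this
      simpa [AddMonoid.End.coe_mul] using this
    have hx : (φ ^ n : G →+ G) (f i : G) ∈ (φ ^ n : G →+ G) '' (A i : Set G) :=
      ⟨(f i : G), (f i).2, rfl⟩
    have h0' : (0 : G) ∈ (φ ^ n : G →+ G) '' (A i : Set G) :=
      ⟨0, (A i).zero_mem, map_zero _⟩
    refine hexp i hx h0' ?_
    simpa using h1
  -- conclude
  rw [← hf, DFinsupp.sumAddHom_apply, map_dfinsuppSum]
  exact DFinsupp.sum_eq_zero fun i => hcomp i
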